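/- Let G be a finite group admitting an automorphism α with gcd(|α|,|G|) = 1 such that G = [G,α]. If |I_G(α)| ≤ m, then |G| ≤ f(m) for some function f depending only on m. Concretely: |G| is bounded in terms of m alone. -/

import Mathlib

set_option linter.unusedSectionVars false

/-- The subgroup `[G,α]` generated by all `g⁻¹ · g^α`. -/
def autCommutator {G : Type*} [Group G] (α : MulAut G) : Subgroup G :=
  Subgroup.closure (Set.range fun g : G => g⁻¹ * α g)

section Aux

variable {G : Type} [Group G] [Finite G]

open scoped commutatorElement

/-- The fixed-point subgroup of `α`. -/
def fixSub (α : MulAut G) : Subgroup G where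
  carrier := {g | α g = g}
  one_mem' := map_one α
  mul_mem' := by
    intro a b ha hb
    simp only [Set.mem_setOf_eq] at *
    rw [map_mul, ha, hb]
  inv_mem' := by
    intro a ha
    simp only [Set.mem_setOf_eq] at *
    rw [map_inv, ha]

/-- Map from cosets of the fixed-point subgroup into the twisted-commutator set. -/
def cosetToI (α : MulAut G) : G ⧸ fixSub α → {x : G // ∃ g : G, g⁻¹ * α g = x} := fun q =>
  Quotient.liftOn' q (fun g => ⟨g * (α g)⁻¹, g⁻¹, by simp [mul_comm]⟩)
    (by
      intro a b hab
      rw [QuotientGroup.leftRel_apply] at hab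
      have h : α (a⁻¹ * b) = a⁻¹ * b := hab
      rw [map_mul, map_inv] at h
      ext
      simp only
      have := congrArg (fun x => a * x * (α b)⁻¹) h
      simpa [mul_assoc] using this)

lemma fixSub_index_le (α : MulAut G) :
    (fixSub α).index ≤ Nat.card {x : G // ∃ g : G, g⁻¹ * α g = x} := by
  have hinj : Function.Injective (cosetToI α) := by
    intro q1 q2
    refine Quotient.inductionOn₂' q1 q2 ?_
    intro a b h
    have h' : a * (α a)⁻¹ = b * (α b)⁻¹ := congrArg Subtype.val h
    apply Quotient.sound'
    rw [QuotientGroup.leftRel_apply]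
    show α (a⁻¹ * b) = a⁻¹ * b
    rw [map_mul, map_inv]
    have := congrArg (fun x => a⁻¹ * x * α b) h'
    simpa [mul_assoc] using this
  exact Nat.card_le_card_of_injective (cosetToI α) hinj

lemma normalCore_central (α : MulAut G) (hcl : autCommutator α = ⊤) :
    (fixSub α).normalCore ≤ Subgroup.center G := by
  intro n hn
  rw [Subgroup.mem_center_iff]
  intro g
  have hle : (⊤ : Subgroup G) ≤ Subgroup.centralizer {n} := by
    rw [← hcl, autCommutator, Subgroup.closure_le]
    rintro _ ⟨g, rfl⟩
    rw [SetLike.mem_coe, Subgroup.mem_centralizer_iff]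
    intro x hx
    rw [Set.mem_singleton_iff] at hx
    rw [hx]
    have h1 : α (g * n * g⁻¹) = g * n * g⁻¹ :=
      (fixSub α).normalCore_le ((fixSub α).normalCore_normal.conj_mem n hn g)
    have h2 : α n = n := (fixSub α).normalCore_le hn
    rw [map_mul, map_mul, map_inv, h2] at h1
    have := congrArg (fun x => g⁻¹ * x * α g) h1
    simpa [mul_assoc] using this.symm
  exact (Subgroup.mem_centralizer_iff.mp (hle (Subgroup.mem_top g)) n rfl).symm

lemma normalCore_index_le (H : Subgroup G) : H.normalCore.index ≤ Nat.factorial H.index := by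
  rw [Subgroup.normalCore_eq_ker, Subgroup.index_ker]
  calc Nat.card (MulAction.toPermHom G (G ⧸ H)).range
      ≤ Nat.card (Equiv.Perm (G ⧸ H)) := Subgroup.card_le_card_group _
    _ = Nat.factorial (Nat.card (G ⧸ H)) := by
        classical
        haveI : Fintype (G ⧸ H) := Fintype.ofFinite _
        simp [Nat.card_eq_fintype_card, Fintype.card_perm]
    _ = Nat.factorial H.index := rfl

lemma comm_left_center (a b z : G) (hz : ∀ x : G, x * z = z * x) : ⁅a * z, b⁆ = ⁅a, b⁆ := by
  simp only [commutatorElement_def, mul_inv_rev]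
  have h1 : z * b = b * z := (hz b).symm
  calc a * z * b * (z⁻¹ * a⁻¹) * b⁻¹
      = a * (z * b * z⁻¹) * a⁻¹ * b⁻¹ := by group
    _ = a * b * a⁻¹ * b⁻¹ := by rw [h1, mul_assoc (b := z), mul_inv_cancel, mul_one]

lemma comm_right_center (a b w : G) (hw : ∀ x : G, x * w = w * x) : ⁅a, b * w⁆ = ⁅a, b⁆ := by
  simp only [commutatorElement_def, mul_inv_rev]
  calc a * (b * w) * a⁻¹ * (w⁻¹ * b⁻¹)
      = a * b * (w * a⁻¹ * w⁻¹) * b⁻¹ := by group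
    _ = a * b * a⁻¹ * b⁻¹ := by rw [← hw a⁻¹, mul_assoc (b := w), mul_inv_cancel, mul_one]

lemma comm_eq_of_center (a b a' b' : G) (ha : a⁻¹ * a' ∈ Subgroup.center G)
    (hb : b⁻¹ * b' ∈ Subgroup.center G) : ⁅a, b⁆ = ⁅a', b'⁆ := by
  have ha' : ∀ x : G, x * (a⁻¹ * a') = (a⁻¹ * a') * x := Subgroup.mem_center_iff.mp ha
  have hb' : ∀ x : G, x * (b⁻¹ * b') = (b⁻¹ * b') * x := Subgroup.mem_center_iff.mp hb
  have e1 : a' = a * (a⁻¹ * a') := by group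
  have e2 : b' = b * (b⁻¹ * b') := by group
  rw [e1, e2, comm_left_center _ _ _ ha', comm_right_center _ _ _ hb']

/-- The surjection from pairs of central cosets onto the commutator set. -/
def pairToComm : (G ⧸ Subgroup.center G) × (G ⧸ Subgroup.center G) → commutatorSet G := fun p =>
  Quotient.liftOn₂' p.1 p.2 (fun a b => (⟨⁅a, b⁆, a, b, rfl⟩ : commutatorSet G))
    (by
      intro a b a' b' ha hb
      rw [QuotientGroup.leftRel_apply] at ha hb
      exact Subtype.ext (comm_eq_of_center a b a' b' ha hb))

lemma card_commutatorSet_le : Nat.card (commutatorSet G) ≤ (Subgroup.center G).index ^ 2 := by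
  have hf : Function.Surjective (pairToComm (G := G)) := by
    rintro ⟨x, a, b, rfl⟩
    exact ⟨(QuotientGroup.mk a, QuotientGroup.mk b), rfl⟩
  calc Nat.card (commutatorSet G)
      ≤ Nat.card ((G ⧸ Subgroup.center G) × (G ⧸ Subgroup.center G)) :=
        Nat.card_le_card_of_surjective _ hf
    _ = (Subgroup.center G).index ^ 2 := by rw [Nat.card_prod, sq]; rfl

/-- The twisting homomorphism into the abelianization. -/
def twistHom (α : MulAut G) : G →* Abelianization G :=
  (Abelianization.of)⁻¹ * (Abelianization.of.comp α.toMonoidHom)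

lemma twistHom_apply (α : MulAut G) (g : G) :
    twistHom α g = Abelianization.of (g⁻¹ * α g) := by
  simp [twistHom, map_mul, map_inv]

lemma card_abelianization_le (α : MulAut G) (hcl : autCommutator α = ⊤) :
    Nat.card (Abelianization G) ≤ Nat.card {x : G // ∃ g : G, g⁻¹ * α g = x} := by
  have hsurj_of : Function.Surjective (Abelianization.of (G := G)) :=
    fun y => Quotient.exists_rep y
  have htop : ∀ g : G, Abelianization.of g ∈ (twistHom α).range := by
    have : (⊤ : Subgroup G) ≤ (twistHom α).range.comap Abelianization.of := by
      rw [← hcl, autCommutator, Subgroup.closure_le]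
      rintro _ ⟨g, rfl⟩
      simp only [SetLike.mem_coe, Subgroup.mem_comap]
      exact ⟨g, (twistHom_apply α g)⟩
    exact fun g => this (Subgroup.mem_top g)
  have hsurj : Function.Surjective
      (fun x : {x : G // ∃ g : G, g⁻¹ * α g = x} => Abelianization.of x.val) := by
    intro y
    obtain ⟨g, rfl⟩ := hsurj_of y
    obtain ⟨g', hg'⟩ := htop g
    exact ⟨⟨g'⁻¹ * α g', g', rfl⟩, by simp only [← twistHom_apply α g']; exact hg'⟩
  exact Nat.card_le_card_of_surjective _ hsurj

end Aux

lemma cardCommutatorBound_mono {n k : ℕ} (h : n ≤ k) :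
    Subgroup.cardCommutatorBound n ≤ Subgroup.cardCommutatorBound k := by
  rcases Nat.eq_zero_or_pos k with hk | hk
  · have hn : n = 0 := by omega
    subst hk; subst hn; exact le_rfl
  unfold Subgroup.cardCommutatorBound
  have h1 : n ^ (2 * n) ≤ k ^ (2 * k) :=
    (Nat.pow_le_pow_left h _).trans (Nat.pow_le_pow_right hk (by omega))
  have ha : n ^ (2 * n + 1) ≤ k ^ (2 * n + 1) := Nat.pow_le_pow_left h _
  have hb : k ^ (2 * n + 1) ≤ k ^ (2 * k + 1) := Nat.pow_le_pow_right hk (by omega)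
  have h2 : n ^ (2 * n + 1) + 1 ≤ k ^ (2 * k + 1) + 1 := by omega
  calc (n ^ (2 * n)) ^ (n ^ (2 * n + 1) + 1)
      ≤ (k ^ (2 * k)) ^ (n ^ (2 * n + 1) + 1) := Nat.pow_le_pow_left h1 _
    _ ≤ (k ^ (2 * k)) ^ (k ^ (2 * k + 1) + 1) :=
        Nat.pow_le_pow_right (Nat.one_le_iff_ne_zero.mpr (by positivity)) h2

/-- If a finite group `G` admits a coprime automorphism `α` with
`G = [G,α]` and `|I_G(α)| ≤ m`, then `|G|` is bounded in terms of `m` alone. -/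
theorem stmt_6 (m : ℕ) :
    ∃ C : ℕ, ∀ (G : Type) (_ : Group G) (_ : Finite G) (α : MulAut G),
      Nat.Coprime (orderOf α) (Nat.card G) →
      autCommutator α = ⊤ →
      Nat.card {x : G // ∃ g : G, g⁻¹ * α g = x} ≤ m →
      Nat.card G ≤ C := by
  refine ⟨m * Subgroup.cardCommutatorBound (Nat.factorial m ^ 2), ?_⟩
  intro G _ _ α _ hcl hI
  have h1 : (fixSub α).index ≤ m := (fixSub_index_le α).trans hI
  have h2 : (Subgroup.center G).index ≤ Nat.factorial m := by
    have h3 : (Subgroup.center G).index ∣ (fixSub α).normalCore.index :=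
      Subgroup.index_dvd_of_le (normalCore_central α hcl)
    have hpos : 0 < (fixSub α).normalCore.index :=
      Nat.pos_of_ne_zero Subgroup.index_ne_zero_of_finite
    exact (Nat.le_of_dvd hpos h3).trans
      ((normalCore_index_le (fixSub α)).trans (Nat.factorial_le h1))
  have h5 : Nat.card (commutatorSet G) ≤ Nat.factorial m ^ 2 :=
    card_commutatorSet_le.trans (Nat.pow_le_pow_left h2 2)
  have h6 : Nat.card (commutator G) ≤ Subgroup.cardCommutatorBound (Nat.factorial m ^ 2) :=
    le_trans (Subgroup.card_commutator_le_of_finite_commutatorSet G) (cardCommutatorBound_mono h5)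
  have h7 : Nat.card (G ⧸ commutator G) ≤ m := (card_abelianization_le α hcl).trans hI
  calc Nat.card G = Nat.card (G ⧸ commutator G) * Nat.card (commutator G) :=
        Subgroup.card_eq_card_quotient_mul_card_subgroup _
    _ ≤ m * Subgroup.cardCommutatorBound (Nat.factorial m ^ 2) := Nat.mul_le_mul h7 h6
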